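/- Deterministic convergence of MEMRL. Let E = EuclideanSpace ℝ (Fin d), J : E → ℝ differentiable with L̂-Lipschitz gradient (L̂ > 0), 0 ≤ J(θ) ≤ M for all θ, λ > L̂, V(w) = sup_{θ ∈ E} [J(θ) − (λ/2)‖θ − w‖²], L̃ = λL̂/(λ − L̂), and ν ≥ 0. Let T be an integer with T ≥ 4L̃² and T ≥ 1, set α = 1/(2√T), and let (w^t)_{t=0}^{T} be generated by w^{t+1} = (1 − αλ)w^t + αλ θ̃^t where each θ̃^t ∈ E satisfies ‖∇J(θ̃^t) − λ(θ̃^t − w^t)‖ ≤ ν. Then (1/T) Σ_{t=0}^{T−1} ‖∇V(w^t)‖² ≤ 8M/√T + 3λ²ν²/(λ − L̂)². -/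

import Mathlib

open RealInnerProductSpace

section MEMRLAux

variable {E : Type*} [NormedAddCommGroup E] [InnerProductSpace ℝ E] [CompleteSpace E]

set_option linter.unusedSectionVars false
set_option linter.unusedVariables false

lemma aux_taylor {J : E → ℝ} {L : ℝ} (hJ : Differentiable ℝ J)
    (hLip : ∀ x y, ‖gradient J x - gradient J y‖ ≤ L * ‖x - y‖) (x y : E) :
    J x + ⟪gradient J x, y - x⟫ - L / 2 * ‖y - x‖ ^ 2 ≤ J y := by
  set Δ := y - x with hΔ
  set g : ℝ → ℝ := fun t => J (x + t • Δ) - ⟪gradient J x, Δ⟫ * t + (L / 2 * ‖Δ‖ ^ 2) * t ^ 2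
    with hg
  have hderiv : ∀ t : ℝ, HasDerivAt g
      (⟪gradient J (x + t • Δ), Δ⟫ - ⟪gradient J x, Δ⟫ + (L / 2 * ‖Δ‖ ^ 2) * (2 * t)) t := by
    intro t
    have hline : HasDerivAt (fun t : ℝ => x + t • Δ) Δ t := by
      simpa using ((hasDerivAt_id t).smul_const Δ).const_add x
    have hcomp : HasDerivAt (fun t : ℝ => J (x + t • Δ))
        ((InnerProductSpace.toDual ℝ E (gradient J (x + t • Δ))) Δ) t :=
      (hasGradientAt_iff_hasFDerivAt.mp (hJ (x + t • Δ)).hasGradientAt).comp_hasDerivAt t hline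
    rw [InnerProductSpace.toDual_apply_apply] at hcomp
    have h2 : HasDerivAt (fun t : ℝ => ⟪gradient J x, Δ⟫ * t) ⟪gradient J x, Δ⟫ t := by
      simpa using (hasDerivAt_id t).const_mul ⟪gradient J x, Δ⟫
    have h3 : HasDerivAt (fun t : ℝ => (L / 2 * ‖Δ‖ ^ 2) * t ^ 2)
        ((L / 2 * ‖Δ‖ ^ 2) * (2 * t)) t := by
      simpa using (hasDerivAt_pow 2 t).const_mul (L / 2 * ‖Δ‖ ^ 2)
    exact (hcomp.sub h2).add h3
  have hmono : MonotoneOn g (Set.Icc (0 : ℝ) 1) := by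
    apply monotoneOn_of_deriv_nonneg (convex_Icc 0 1)
    · exact fun t _ => ((hderiv t).continuousAt).continuousWithinAt
    · exact fun t _ => ((hderiv t).differentiableAt).differentiableWithinAt
    · intro t ht
      rw [interior_Icc] at ht
      rw [(hderiv t).deriv]
      have hcs : |⟪gradient J (x + t • Δ) - gradient J x, Δ⟫| ≤
          ‖gradient J (x + t • Δ) - gradient J x‖ * ‖Δ‖ := abs_real_inner_le_norm _ _
      have hlip' : ‖gradient J (x + t • Δ) - gradient J x‖ ≤ L * (t * ‖Δ‖) := by
        have := hLip (x + t • Δ) x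
        simpa [norm_smul, abs_of_pos ht.1, mul_assoc] using this
      have hinner : ⟪gradient J (x + t • Δ) - gradient J x, Δ⟫
          = ⟪gradient J (x + t • Δ), Δ⟫ - ⟪gradient J x, Δ⟫ := inner_sub_left _ _ _
      have hΔn : (0:ℝ) ≤ ‖Δ‖ := norm_nonneg _
      nlinarith [abs_nonneg (⟪gradient J (x + t • Δ) - gradient J x, Δ⟫ : ℝ),
        neg_abs_le (⟪gradient J (x + t • Δ) - gradient J x, Δ⟫ : ℝ), ht.1.le]
  have h01 := hmono (Set.mem_Icc.mpr ⟨le_refl 0, zero_le_one⟩)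
      (Set.mem_Icc.mpr ⟨zero_le_one, le_refl 1⟩) zero_le_one
  simp only [hg] at h01
  norm_num at h01
  rw [show x + Δ = y by rw [hΔ]; abel] at h01
  rw [← inner_gradient_left] at h01
  linarith

lemma aux_strmono {J : E → ℝ} {Lhat lam : ℝ}
    (hLip : ∀ x y, ‖gradient J x - gradient J y‖ ≤ Lhat * ‖x - y‖) (x y : E) :
    (lam - Lhat) * ‖x - y‖ ^ 2 ≤ ⟪lam • (x - y) - (gradient J x - gradient J y), x - y⟫ := by
  rw [inner_sub_left, real_inner_smul_left, real_inner_self_eq_norm_sq]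
  have h1 := abs_real_inner_le_norm (gradient J x - gradient J y) (x - y)
  have h2 := hLip x y
  have h3 := le_abs_self (⟪gradient J x - gradient J y, x - y⟫ : ℝ)
  nlinarith [norm_nonneg (x - y), norm_nonneg (gradient J x - gradient J y),
    mul_le_mul_of_nonneg_right h2 (norm_nonneg (x - y))]

lemma aux_exists_max [FiniteDimensional ℝ E] {J : E → ℝ} {M lam : ℝ}
    (hJc : Continuous J) (hJb : ∀ θ : E, 0 ≤ J θ ∧ J θ ≤ M) (hlam : 0 < lam) (w : E) :
    ∃ θh : E, ∀ θ : E, J θ - lam / 2 * ‖θ - w‖ ^ 2 ≤ J θh - lam / 2 * ‖θh - w‖ ^ 2 := by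
  have hM0 : 0 ≤ M := le_trans (hJb w).1 (hJb w).2
  set R : ℝ := Real.sqrt (2 * M / lam + 1) with hR
  have hR0 : 0 ≤ R := Real.sqrt_nonneg _
  have hR2 : R ^ 2 = 2 * M / lam + 1 := Real.sq_sqrt (by positivity)
  have hcont : Continuous fun θ : E => J θ - lam / 2 * ‖θ - w‖ ^ 2 := by
    exact hJc.sub (continuous_const.mul (((continuous_id.sub continuous_const).norm).pow 2))
  obtain ⟨θh, hθhK, hmaxK⟩ := (isCompact_closedBall w R).exists_isMaxOn
    ⟨w, Metric.mem_closedBall_self hR0⟩ hcont.continuousOn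
  refine ⟨θh, fun θ => ?_⟩
  by_cases hθ : θ ∈ Metric.closedBall w R
  · exact hmaxK hθ
  · have hfar : R < ‖θ - w‖ := by
      rw [Metric.mem_closedBall, not_le, dist_eq_norm] at hθ; exact hθ
    have hfar2 : R ^ 2 ≤ ‖θ - w‖ ^ 2 := by nlinarith
    have hw : J w - lam / 2 * ‖w - w‖ ^ 2 ≤ J θh - lam / 2 * ‖θh - w‖ ^ 2 :=
      hmaxK (Metric.mem_closedBall_self hR0)
    have h1 : J θ ≤ M := (hJb θ).2
    have h2 : 0 ≤ J w := (hJb w).1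
    have h3 : lam / 2 * ‖θ - w‖ ^ 2 ≥ lam / 2 * (2 * M / lam + 1) := by
      rw [← hR2]; exact mul_le_mul_of_nonneg_left hfar2 (by positivity)
    have h4 : lam / 2 * (2 * M / lam + 1) = M + lam / 2 := by field_simp
    simp only [sub_self, norm_zero] at hw
    nlinarith

lemma aux_phi_grad {J : E → ℝ} (hJ : Differentiable ℝ J) (lam : ℝ) (w θ : E) :
    HasGradientAt (fun θ : E => J θ - lam / 2 * ‖θ - w‖ ^ 2)
      (gradient J θ - lam • (θ - w)) θ := by
  have hJfd : HasFDerivAt J (InnerProductSpace.toDual ℝ E (gradient J θ)) θ :=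
    hasGradientAt_iff_hasFDerivAt.mp (hJ θ).hasGradientAt
  have hsub : HasFDerivAt (fun θ : E => θ - w) (ContinuousLinearMap.id ℝ E) θ :=
    (hasFDerivAt_id θ).sub_const w
  have hq : HasFDerivAt (fun θ : E => ‖θ - w‖ ^ 2)
      (2 • (innerSL ℝ (θ - w)).comp (ContinuousLinearMap.id ℝ E)) θ := hsub.norm_sq
  have hφ := hJfd.sub (hq.const_mul (lam / 2))
  rw [hasGradientAt_iff_hasFDerivAt]
  refine hφ.congr_fderiv ?_
  ext v
  simp only [InnerProductSpace.toDual_apply_apply, ContinuousLinearMap.sub_apply,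
    ContinuousLinearMap.smul_apply, ContinuousLinearMap.comp_apply,
    ContinuousLinearMap.coe_id', id_eq, innerSL_apply_apply, smul_eq_mul, two_smul,
    inner_sub_left, real_inner_smul_left, ContinuousLinearMap.add_apply]
  ring

lemma aux_foc {J : E → ℝ} {lam : ℝ} (hJ : Differentiable ℝ J) {w θh : E}
    (hmax : ∀ θ : E, J θ - lam / 2 * ‖θ - w‖ ^ 2 ≤ J θh - lam / 2 * ‖θh - w‖ ^ 2) :
    gradient J θh = lam • (θh - w) := by
  have hloc : IsLocalMax (fun θ : E => J θ - lam / 2 * ‖θ - w‖ ^ 2) θh :=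
    Filter.Eventually.of_forall hmax
  have hfd := hasGradientAt_iff_hasFDerivAt.mp (aux_phi_grad hJ lam w θh)
  have hzero := hloc.fderiv_eq_zero
  rw [hfd.fderiv] at hzero
  have := (InnerProductSpace.toDual ℝ E).map_eq_zero_iff.mp (by rw [hzero])
  exact sub_eq_zero.mp this

lemma aux_near {J : E → ℝ} {Lhat lam ν : ℝ}
    (hLip : ∀ x y, ‖gradient J x - gradient J y‖ ≤ Lhat * ‖x - y‖)
    (hLhat : 0 < Lhat) (hlam : Lhat < lam) {w θh θ : E}
    (hfoc : gradient J θh = lam • (θh - w))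
    (hres : ‖gradient J θ - lam • (θ - w)‖ ≤ ν) :
    ‖θ - θh‖ ≤ ν / (lam - Lhat) := by
  have hμ : 0 < lam - Lhat := by linarith
  have h1 := aux_strmono (lam := lam) hLip θ θh
  have key : lam • (θ - θh) - (gradient J θ - gradient J θh)
      = -(gradient J θ - lam • (θ - w)) := by
    rw [hfoc]; module
  rw [key] at h1
  have h2 : ⟪-(gradient J θ - lam • (θ - w)), θ - θh⟫
      ≤ ‖gradient J θ - lam • (θ - w)‖ * ‖θ - θh‖ := by
    calc ⟪-(gradient J θ - lam • (θ - w)), θ - θh⟫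
        ≤ ‖-(gradient J θ - lam • (θ - w))‖ * ‖θ - θh‖ := real_inner_le_norm _ _
      _ = ‖gradient J θ - lam • (θ - w)‖ * ‖θ - θh‖ := by rw [norm_neg]
  have h3 : (lam - Lhat) * ‖θ - θh‖ ^ 2 ≤ ν * ‖θ - θh‖ := by
    nlinarith [norm_nonneg (θ - θh)]
  have hν0 : 0 ≤ ν := le_trans (norm_nonneg _) hres
  rcases eq_or_lt_of_le (norm_nonneg (θ - θh)) with h | h
  · rw [← h]; exact div_nonneg hν0 hμ.le
  · rw [le_div_iff₀ hμ]; nlinarith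

lemma aux_argmax_lip {J : E → ℝ} {Lhat lam : ℝ}
    (hLip : ∀ x y, ‖gradient J x - gradient J y‖ ≤ Lhat * ‖x - y‖)
    (hLhat : 0 < Lhat) (hlam : Lhat < lam) {w w' θh θh' : E}
    (hfoc : gradient J θh = lam • (θh - w))
    (hfoc' : gradient J θh' = lam • (θh' - w')) :
    (lam - Lhat) * ‖θh - θh'‖ ≤ lam * ‖w - w'‖ := by
  have hμ : 0 < lam - Lhat := by linarith
  have h1 := aux_strmono (lam := lam) hLip θh θh'
  have key : lam • (θh - θh') - (gradient J θh - gradient J θh') = lam • (w - w') := by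
    rw [hfoc, hfoc']; module
  rw [key] at h1
  have hlam0 : (0:ℝ) < lam := hLhat.trans hlam
  have h2 : ⟪lam • (w - w'), θh - θh'⟫ ≤ ‖lam • (w - w')‖ * ‖θh - θh'‖ :=
    real_inner_le_norm _ _
  have h4 : ‖lam • (w - w')‖ ≤ lam * ‖w - w'‖ := by
    rw [norm_smul, Real.norm_eq_abs, abs_of_pos hlam0]
  rcases eq_or_lt_of_le (norm_nonneg (θh - θh')) with h | h
  · rw [← h, mul_zero]; positivity
  · have h5 : (lam - Lhat) * ‖θh - θh'‖ ^ 2 ≤ lam * ‖w - w'‖ * ‖θh - θh'‖ := by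
      nlinarith [norm_nonneg (θh - θh'), norm_nonneg (w - w')]
    nlinarith

lemma aux_lower {J : E → ℝ} {Lhat lam : ℝ} (hJ : Differentiable ℝ J)
    (hLip : ∀ x y, ‖gradient J x - gradient J y‖ ≤ Lhat * ‖x - y‖)
    (hLhat : 0 < Lhat) (hlam : Lhat < lam) {w w' θh θh' : E}
    (hfoc : gradient J θh = lam • (θh - w))
    (hmax' : ∀ θ : E, J θ - lam / 2 * ‖θ - w'‖ ^ 2 ≤ J θh' - lam / 2 * ‖θh' - w'‖ ^ 2) :
    (J θh - lam / 2 * ‖θh - w‖ ^ 2) + ⟪lam • (θh - w), w' - w⟫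
      - (lam * Lhat / (2 * (lam + Lhat))) * ‖w' - w‖ ^ 2
      ≤ J θh' - lam / 2 * ‖θh' - w'‖ ^ 2 := by
  set Δ := w' - w with hΔ
  set c : ℝ := lam / (lam + Lhat) with hc
  set θc : E := θh + c • Δ with hθc
  have h1 : J θc - lam / 2 * ‖θc - w'‖ ^ 2 ≤ J θh' - lam / 2 * ‖θh' - w'‖ ^ 2 := hmax' θc
  have h2 : J θh + ⟪gradient J θh, c • Δ⟫ - Lhat / 2 * ‖c • Δ‖ ^ 2 ≤ J θc := by
    have := aux_taylor hJ hLip θh θc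
    simpa [hθc] using this
  have hexp : θc - w' = (θh - w) + (c - 1) • Δ := by
    rw [hθc, hΔ]; module
  have h3 : ‖θc - w'‖ ^ 2 = ‖θh - w‖ ^ 2 + 2 * ((c-1) * ⟪θh - w, Δ⟫)
      + (c-1) ^ 2 * ‖Δ‖ ^ 2 := by
    rw [hexp, norm_add_sq_real, real_inner_smul_right, norm_smul, Real.norm_eq_abs,
      mul_pow, sq_abs]
  have h4 : ⟪gradient J θh, c • Δ⟫ = c * (lam * ⟪θh - w, Δ⟫) := by
    rw [hfoc, real_inner_smul_right, real_inner_smul_left]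
  have h5 : ‖c • Δ‖ ^ 2 = c ^ 2 * ‖Δ‖ ^ 2 := by
    rw [norm_smul, Real.norm_eq_abs, mul_pow, sq_abs]
  have h6 : ⟪lam • (θh - w), Δ⟫ = lam * ⟪θh - w, Δ⟫ := real_inner_smul_left _ _ _
  have hlp : 0 < lam + Lhat := by linarith
  rw [h6]
  have hkey : Lhat / 2 * (c^2 * ‖Δ‖^2) + lam / 2 * ((c-1)^2 * ‖Δ‖^2)
      + c * (lam * ⟪θh - w, Δ⟫) - lam * ((c-1) * ⟪θh - w, Δ⟫)
      = lam * Lhat / (2 * (lam + Lhat)) * ‖Δ‖ ^ 2 + lam * ⟪θh - w, Δ⟫ := by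
    rw [hc]; field_simp; ring
  nlinarith [h1, h2, h3, h4, h5]

lemma aux_upper {J : E → ℝ} {Lhat lam : ℝ}
    (hLip : ∀ x y, ‖gradient J x - gradient J y‖ ≤ Lhat * ‖x - y‖)
    (hLhat : 0 < Lhat) (hlam : Lhat < lam) {w w' θh θh' : E}
    (hfoc : gradient J θh = lam • (θh - w))
    (hfoc' : gradient J θh' = lam • (θh' - w'))
    (hmax : ∀ θ : E, J θ - lam / 2 * ‖θ - w‖ ^ 2 ≤ J θh - lam / 2 * ‖θh - w‖ ^ 2) :
    J θh' - lam / 2 * ‖θh' - w'‖ ^ 2 ≤ (J θh - lam / 2 * ‖θh - w‖ ^ 2)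
      + ⟪lam • (θh - w), w' - w⟫ + (lam ^ 2 / (lam - Lhat)) * ‖w' - w‖ ^ 2 := by
  have hμ : 0 < lam - Lhat := by linarith
  have hlam0 : (0:ℝ) < lam := hLhat.trans hlam
  set Δ := w' - w with hΔ
  have hexp : θh' - w' = (θh' - w) - Δ := by rw [hΔ]; abel
  have h3 : ‖θh' - w'‖ ^ 2 = ‖θh' - w‖ ^ 2 - 2 * ⟪θh' - w, Δ⟫ + ‖Δ‖ ^ 2 := by
    rw [hexp, norm_sub_sq_real]
  have h1 : J θh' - lam / 2 * ‖θh' - w‖ ^ 2 ≤ J θh - lam / 2 * ‖θh - w‖ ^ 2 := hmax θh'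
  have h4 : ⟪θh' - w, Δ⟫ = ⟪θh - w, Δ⟫ + ⟪θh' - θh, Δ⟫ := by
    rw [← inner_add_left]; congr 1; abel
  have h5 : ⟪θh' - θh, Δ⟫ ≤ (lam / (lam - Lhat)) * ‖Δ‖ * ‖Δ‖ := by
    have hl := aux_argmax_lip hLip hLhat hlam hfoc hfoc'
    have hcs : ⟪θh' - θh, Δ⟫ ≤ ‖θh' - θh‖ * ‖Δ‖ := real_inner_le_norm _ _
    have hn : ‖θh' - θh‖ = ‖θh - θh'‖ := by rw [← norm_neg]; congr 1; abel
    have h6 : ‖θh - θh'‖ ≤ (lam / (lam - Lhat)) * ‖w - w'‖ := by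
      rw [div_mul_eq_mul_div, le_div_iff₀ hμ]; linarith [hl]
    have h7 : ‖w - w'‖ = ‖Δ‖ := by rw [hΔ, ← norm_neg]; congr 1; abel
    rw [h7] at h6
    rw [hn] at hcs
    nlinarith [norm_nonneg (Δ : E), norm_nonneg (θh - θh')]
  have h6 : ⟪lam • (θh - w), Δ⟫ = lam * ⟪θh - w, Δ⟫ := real_inner_smul_left _ _ _
  have hΔ2 : (0:ℝ) ≤ ‖Δ‖ ^ 2 := by positivity
  have hsq : ‖Δ‖ * ‖Δ‖ = ‖Δ‖ ^ 2 := by ring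
  rw [h6]
  have hdiv : lam * (lam / (lam - Lhat)) = lam ^ 2 / (lam - Lhat) := by
    field_simp
  nlinarith [h1, h3, h4, h5]

lemma aux_gradV {J V : E → ℝ} {Lhat lam : ℝ} (hJ : Differentiable ℝ J)
    (hLip : ∀ x y, ‖gradient J x - gradient J y‖ ≤ Lhat * ‖x - y‖)
    (hLhat : 0 < Lhat) (hlam : Lhat < lam) (θhat : E → E)
    (hmax : ∀ w θ : E, J θ - lam / 2 * ‖θ - w‖ ^ 2
      ≤ J (θhat w) - lam / 2 * ‖θhat w - w‖ ^ 2)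
    (hVval : ∀ w : E, V w = J (θhat w) - lam / 2 * ‖θhat w - w‖ ^ 2) (w0 : E) :
    HasGradientAt V (lam • (θhat w0 - w0)) w0 := by
  have hμ : 0 < lam - Lhat := by linarith
  set K : ℝ := lam * Lhat / (2 * (lam + Lhat)) + lam ^ 2 / (lam - Lhat) + 1 with hK
  have hlam0 : (0:ℝ) < lam := hLhat.trans hlam
  have hA : (0:ℝ) < lam * Lhat / (2 * (lam + Lhat)) :=
    div_pos (mul_pos hlam0 hLhat) (by linarith)
  have hB : (0:ℝ) < lam ^ 2 / (lam - Lhat) := div_pos (pow_pos hlam0 2) hμ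
  have hK0 : 0 < K := by rw [hK]; linarith
  clear_value K
  have hfoc0 : gradient J (θhat w0) = lam • (θhat w0 - w0) := aux_foc hJ (hmax w0)
  have hbound : ∀ w' : E,
      |V w' - V w0 - ⟪lam • (θhat w0 - w0), w' - w0⟫| ≤ K * ‖w' - w0‖ ^ 2 := by
    intro w'
    have hfoc' : gradient J (θhat w') = lam • (θhat w' - w') := aux_foc hJ (hmax w')
    have hlow := aux_lower hJ hLip hLhat hlam hfoc0 (hmax w')
    have hup := aux_upper hLip hLhat hlam hfoc0 hfoc' (hmax w0)
    rw [← hVval, ← hVval] at hlow hup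
    rw [abs_le]
    have h1 : lam * Lhat / (2 * (lam + Lhat)) ≤ K := by rw [hK]; linarith
    have h2 : lam ^ 2 / (lam - Lhat) ≤ K := by rw [hK]; linarith
    have hsq : (0:ℝ) ≤ ‖w' - w0‖ ^ 2 := by positivity
    have e1 := mul_le_mul_of_nonneg_right h1 hsq
    have e2 := mul_le_mul_of_nonneg_right h2 hsq
    constructor
    · linarith
    · linarith
  rw [hasGradientAt_iff_isLittleO, Asymptotics.isLittleO_iff]
  intro c hc
  filter_upwards [Metric.ball_mem_nhds w0 (div_pos hc hK0)] with w' hw'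
  rw [Metric.mem_ball, dist_eq_norm] at hw'
  rw [Real.norm_eq_abs]
  calc |V w' - V w0 - ⟪lam • (θhat w0 - w0), w' - w0⟫|
      ≤ K * ‖w' - w0‖ ^ 2 := hbound w'
    _ ≤ c * ‖w' - w0‖ := by
        rw [lt_div_iff₀ hK0] at hw'
        nlinarith [norm_nonneg (w' - w0)]

end MEMRLAux

set_option maxHeartbeats 1000000 in
/-- Deterministic convergence of MEMRL: with `α = 1/(2√T)`, `T ≥ 4L̃²`,
and `ν`-accurate inner solutions, the average squared gradient norm of the
Moreau envelope satisfies
`(1/T) Σ_{t<T} ‖∇V(w^t)‖² ≤ 8M/√T + 3λ²ν²/(λ − L̂)²`. -/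
theorem memrl_deterministic_convergence
    (d : ℕ) (hd : 0 < d)
    (J : EuclideanSpace ℝ (Fin d) → ℝ) (Lhat M lam ν : ℝ)
    (hLhat : 0 < Lhat) (hJ : Differentiable ℝ J)
    (hLip : ∀ x y, ‖gradient J x - gradient J y‖ ≤ Lhat * ‖x - y‖)
    (hJb : ∀ θ : EuclideanSpace ℝ (Fin d), 0 ≤ J θ ∧ J θ ≤ M)
    (hlam : Lhat < lam) (hν : 0 ≤ ν)
    (V : EuclideanSpace ℝ (Fin d) → ℝ)
    (hV : ∀ w, V w = ⨆ θ : EuclideanSpace ℝ (Fin d), (J θ - lam / 2 * ‖θ - w‖ ^ 2))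
    (Ltil : ℝ) (hLtil : Ltil = lam * Lhat / (lam - Lhat))
    (T : ℕ) (hT4 : 4 * Ltil ^ 2 ≤ (T : ℝ)) (hT1 : 1 ≤ T)
    (α : ℝ) (hα : α = 1 / (2 * Real.sqrt T))
    (w θtil : ℕ → EuclideanSpace ℝ (Fin d))
    (hupd : ∀ t : ℕ, w (t + 1) = (1 - α * lam) • w t + (α * lam) • θtil t)
    (hθ : ∀ t : ℕ, ‖gradient J (θtil t) - lam • (θtil t - w t)‖ ≤ ν) :
    (1 / (T : ℝ)) * ∑ t ∈ Finset.range T, ‖gradient V (w t)‖ ^ 2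
      ≤ 8 * M / Real.sqrt T + 3 * lam ^ 2 * ν ^ 2 / (lam - Lhat) ^ 2 := by
  have hlam0 : (0:ℝ) < lam := hLhat.trans hlam
  have hμ : (0:ℝ) < lam - Lhat := by linarith
  have hM0 : (0:ℝ) ≤ M := le_trans (hJb 0).1 (hJb 0).2
  -- the argmax map
  choose θhat hθmax using fun w0 : EuclideanSpace ℝ (Fin d) =>
    aux_exists_max hJ.continuous hJb hlam0 w0
  have hVval : ∀ w0, V w0 = J (θhat w0) - lam / 2 * ‖θhat w0 - w0‖ ^ 2 := by
    intro w0
    rw [hV w0]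
    apply le_antisymm
    · exact ciSup_le (hθmax w0)
    · exact le_ciSup ⟨J (θhat w0) - lam / 2 * ‖θhat w0 - w0‖ ^ 2, by
        rintro x ⟨θ, rfl⟩; exact hθmax w0 θ⟩ (θhat w0)
  have hgrad : ∀ w0, gradient V w0 = lam • (θhat w0 - w0) := fun w0 =>
    (aux_gradV hJ hLip hLhat hlam θhat hθmax hVval w0).gradient
  have hfoc : ∀ w0, gradient J (θhat w0) = lam • (θhat w0 - w0) := fun w0 =>
    aux_foc hJ (hθmax w0)
  have hVub : ∀ w0, V w0 ≤ M := by
    intro w0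
    rw [hVval w0]
    have h1 := (hJb (θhat w0)).2
    nlinarith [sq_nonneg ‖θhat w0 - w0‖]
  have hVlb : ∀ w0, 0 ≤ V w0 := by
    intro w0
    have h := hθmax w0 w0
    simp only [sub_self, norm_zero] at h
    rw [hVval w0]
    have h2 := (hJb w0).1
    nlinarith
  -- scalar setup
  set s : ℝ := Real.sqrt (T : ℝ) with hs
  have hT0 : (0:ℝ) < T := by
    have : (1:ℝ) ≤ (T:ℝ) := by exact_mod_cast hT1
    linarith
  have hs0 : 0 < s := Real.sqrt_pos.mpr hT0
  have hs0' : s ≠ 0 := ne_of_gt hs0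
  have hssq : s * s = (T : ℝ) := Real.mul_self_sqrt hT0.le
  have hLtil0 : 0 < Ltil := by rw [hLtil]; exact div_pos (mul_pos hlam0 hLhat) hμ
  have hs2L : 2 * Ltil ≤ s := by
    have h1 : (2 * Ltil) ^ 2 ≤ (T : ℝ) := by nlinarith
    calc 2 * Ltil = Real.sqrt ((2 * Ltil) ^ 2) := (Real.sqrt_sq (by linarith)).symm
      _ ≤ s := Real.sqrt_le_sqrt h1
  have hα0 : 0 < α := by rw [hα]; positivity
  have hαL : Ltil * α ≤ 1/4 := by
    rw [hα, mul_one_div, div_le_iff₀ (by positivity : (0:ℝ) < 2 * s)]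
    linarith
  set ε : ℝ := lam * ν / (lam - Lhat) with hε
  have hε0 : 0 ≤ ε := div_nonneg (mul_nonneg hlam0.le hν) hμ.le
  -- per step inequality
  have hstep : ∀ t : ℕ, α/2 * ‖gradient V (w t)‖^2 - 5*α/4*ε^2
      ≤ V (w (t+1)) - V (w t) := by
    intro t
    have hlow := aux_lower hJ hLip hLhat hlam (hfoc (w t)) (hθmax (w (t+1)))
    rw [← hVval (w t), ← hVval (w (t+1))] at hlow
    set G : EuclideanSpace ℝ (Fin d) := lam • (θhat (w t) - w t) with hGdef
    set e : EuclideanSpace ℝ (Fin d) := lam • (θtil t - θhat (w t)) with hedef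
    have hΔ : w (t+1) - w t = α • (G + e) := by
      rw [hupd t, hGdef, hedef]; module
    rw [hΔ] at hlow
    have hinner : ⟪G, α • (G + e)⟫ = α * (‖G‖^2 + ⟪G, e⟫) := by
      rw [real_inner_smul_right, inner_add_right, real_inner_self_eq_norm_sq]
    have hnorm2 : ‖α • (G + e)‖^2 = α^2 * ‖G + e‖^2 := by
      rw [norm_smul, Real.norm_eq_abs, mul_pow, sq_abs]
    rw [hinner, hnorm2] at hlow
    have he : ‖e‖ ≤ ε := by
      have h1 := aux_near hLip hLhat hlam (hfoc (w t)) (hθ t)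
      have h2 : ‖e‖ = lam * ‖θtil t - θhat (w t)‖ := by
        rw [hedef, norm_smul, Real.norm_eq_abs, abs_of_pos hlam0]
      rw [h2, hε]
      calc lam * ‖θtil t - θhat (w t)‖ ≤ lam * (ν / (lam - Lhat)) :=
            mul_le_mul_of_nonneg_left h1 hlam0.le
        _ = lam * ν / (lam - Lhat) := by ring
    have hGe : -(‖G‖ * ε) ≤ ⟪G, e⟫ := by
      have h1 := abs_real_inner_le_norm G e
      have h2 := neg_abs_le (⟪G, e⟫ : ℝ)
      have h3 := mul_le_mul_of_nonneg_left he (norm_nonneg G)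
      linarith
    have hGpe : ‖G + e‖^2 ≤ (‖G‖ + ε)^2 := by
      have h1 : ‖G + e‖ ≤ ‖G‖ + ε := (norm_add_le G e).trans (by linarith)
      exact pow_le_pow_left₀ (norm_nonneg _) h1 2
    have hK10 : (0:ℝ) ≤ lam * Lhat / (2 * (lam + Lhat)) :=
      le_of_lt (div_pos (mul_pos hlam0 hLhat) (by linarith))
    have hK1Ltil : lam * Lhat / (2 * (lam + Lhat)) ≤ Ltil / 2 := by
      rw [hLtil, div_div]
      exact div_le_div_of_nonneg_left (mul_pos hlam0 hLhat).le
        (by linarith) (by linarith)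
    have hK1α : lam * Lhat / (2 * (lam + Lhat)) * α^2 ≤ α/8 := by
      have h1 : lam * Lhat / (2 * (lam + Lhat)) * α ≤ 1/8 := by
        calc lam * Lhat / (2 * (lam + Lhat)) * α ≤ Ltil / 2 * α :=
              mul_le_mul_of_nonneg_right hK1Ltil hα0.le
          _ ≤ 1/8 := by nlinarith
      calc lam * Lhat / (2 * (lam + Lhat)) * α^2
          = (lam * Lhat / (2 * (lam + Lhat)) * α) * α := by ring
        _ ≤ (1/8) * α := mul_le_mul_of_nonneg_right h1 hα0.le
        _ = α/8 := by ring
    have t1 := mul_le_mul_of_nonneg_left hGe hα0.le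
    have t2 : lam * Lhat / (2 * (lam + Lhat)) * α^2 * ‖G + e‖^2
        ≤ α/8 * (‖G‖ + ε)^2 := by
      calc lam * Lhat / (2 * (lam + Lhat)) * α^2 * ‖G + e‖^2
          ≤ lam * Lhat / (2 * (lam + Lhat)) * α^2 * (‖G‖ + ε)^2 :=
            mul_le_mul_of_nonneg_left hGpe (mul_nonneg hK10 (sq_nonneg α))
        _ ≤ α/8 * (‖G‖ + ε)^2 := mul_le_mul_of_nonneg_right hK1α (sq_nonneg _)
    have hquad : 0 ≤ 3/8*‖G‖^2 - 5/4*(‖G‖*ε) + 9/8*ε^2 := by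
      nlinarith [sq_nonneg (3*‖G‖ - 5*ε), sq_nonneg ε]
    have m := mul_nonneg hα0.le hquad
    rw [hgrad (w t), ← hGdef]
    nlinarith [hlow, t1, t2, m]
  -- telescoping sum
  set S := ∑ t ∈ Finset.range T, ‖gradient V (w t)‖ ^ 2 with hSdef
  have hS0 : 0 ≤ S := Finset.sum_nonneg fun i _ => by positivity
  have hsum : (α/2)*S - T*(5*α/4*ε^2) ≤ M := by
    have h1 : ∑ t ∈ Finset.range T, (α/2 * ‖gradient V (w t)‖^2 - 5*α/4*ε^2)
        ≤ ∑ t ∈ Finset.range T, (V (w (t+1)) - V (w t)) :=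
      Finset.sum_le_sum fun t _ => hstep t
    rw [Finset.sum_range_sub (fun n => V (w n))] at h1
    have h2 : ∑ t ∈ Finset.range T, (α/2 * ‖gradient V (w t)‖^2 - 5*α/4*ε^2)
        = (α/2)*S - T*(5*α/4*ε^2) := by
      rw [Finset.sum_sub_distrib, ← Finset.mul_sum, Finset.sum_const, Finset.card_range,
        nsmul_eq_mul]
    rw [h2] at h1
    linarith [hVub (w T), hVlb (w 0)]
  -- final arithmetic
  rw [hα] at hsum
  have hS4 : S ≤ 4*s*M + 5*(T:ℝ)*ε^2/2 := by
    have h4 := mul_le_mul_of_nonneg_left hsum (by positivity : (0:ℝ) ≤ 4*s)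
    have hexp : 4*s*((1 / (2 * s)/2)*S - (T:ℝ)*(5*(1 / (2 * s))/4*ε^2))
        = S - 5*(T:ℝ)*ε^2/2 := by
      field_simp
      ring
    rw [hexp] at h4
    linarith
  have hfin : S ≤ 8*M*s + 3*(T:ℝ)*ε^2 := by
    nlinarith [mul_nonneg hM0 hs0.le, mul_nonneg hT0.le (sq_nonneg ε)]
  have hεsq : 3 * lam ^ 2 * ν ^ 2 / (lam - Lhat) ^ 2 = 3*ε^2 := by
    rw [hε]
    field_simp
  rw [hεsq, one_div, inv_mul_eq_div, div_le_iff₀ hT0]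
  have hrhs : (8 * M / s + 3*ε^2) * (T:ℝ) = 8*M*s + 3*(T:ℝ)*ε^2 := by
    rw [← hssq]
    field_simp
  rw [hrhs]
  exact hfin
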